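/- Let 0 < s₁ ≤ 1. Then there exists a constant C > 0 such that for all t ≥ 0, ∫₀ᵗ (1 + t − τ)^{−s₁} (1 + τ)^{−1} dτ ≤ C (1 + t)^{−s₁} log(1 + t) whenever t ≥ 1. -/

import Mathlib

open Real intervalIntegral

/-- Convolution-type decay estimate, borderline case `s₂ = 1`:
`∫₀ᵗ (1+t−τ)^{−s₁}(1+τ)^{−1} dτ ≤ C (1+t)^{−s₁} log(1+t)` for `t ≥ 1`. -/
theorem convolution_decay_s2_eq_one (s₁ : ℝ) (h1 : 0 < s₁) (h2 : s₁ ≤ 1) :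
    ∃ C > 0, ∀ t : ℝ, 1 ≤ t →
      (∫ τ in (0:ℝ)..t, (1 + t - τ) ^ (-s₁) * (1 + τ) ^ (-(1:ℝ))) ≤
        C * (1 + t) ^ (-s₁) * Real.log (1 + t) := by
  refine ⟨4, by norm_num, fun t ht => ?_⟩
  have ht0 : (0:ℝ) ≤ t := le_trans zero_le_one ht
  have hbt : (0:ℝ) < 1 + t := by linarith
  have huIcc : Set.uIcc (0:ℝ) t = Set.Icc 0 t := Set.uIcc_of_le ht0
  -- pointwise bound on [0, t]
  have key : ∀ τ ∈ Set.Icc (0:ℝ) t,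
      (1 + t - τ) ^ (-s₁) * (1 + τ) ^ (-(1:ℝ)) ≤
        2 * (1 + t) ^ (-s₁) * ((1 + τ)⁻¹ + (1 + t - τ)⁻¹) := by
    intro τ hτ
    obtain ⟨hτ0, hτt⟩ := hτ
    have ha : (0:ℝ) < 1 + t - τ := by linarith
    have hb : (0:ℝ) < 1 + τ := by linarith
    have hbts : (0:ℝ) < (1 + t) ^ (-s₁) := Real.rpow_pos_of_pos hbt _
    rw [Real.rpow_neg_one]
    rcases le_or_gt (1 + t) (2 * (1 + t - τ)) with hc | hc
    · -- 1+t-τ ≥ (1+t)/2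
      have h2t : (0:ℝ) < (1 + t) / 2 := by linarith
      have step1 : (1 + t - τ) ^ (-s₁) ≤ ((1 + t) / 2) ^ (-s₁) :=
        Real.rpow_le_rpow_of_nonpos h2t (by linarith) (by linarith)
      have step2 : ((1 + t) / 2) ^ (-s₁) = (1 + t) ^ (-s₁) * (2:ℝ) ^ s₁ := by
        rw [Real.div_rpow hbt.le (by norm_num : (0:ℝ) ≤ 2),
          Real.rpow_neg (by norm_num : (0:ℝ) ≤ 2), div_eq_mul_inv, inv_inv]
      have step3 : (2:ℝ) ^ s₁ ≤ 2 := by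
        calc (2:ℝ) ^ s₁ ≤ (2:ℝ) ^ (1:ℝ) :=
              Real.rpow_le_rpow_of_exponent_le (by norm_num) h2
        _ = 2 := Real.rpow_one 2
      have hA : (1 + t - τ) ^ (-s₁) ≤ 2 * (1 + t) ^ (-s₁) := by
        calc (1 + t - τ) ^ (-s₁) ≤ (1 + t) ^ (-s₁) * (2:ℝ) ^ s₁ := step2 ▸ step1
        _ ≤ (1 + t) ^ (-s₁) * 2 := by nlinarith
        _ = 2 * (1 + t) ^ (-s₁) := by ring
      have : (1 + t - τ) ^ (-s₁) * (1 + τ)⁻¹ ≤ 2 * (1 + t) ^ (-s₁) * (1 + τ)⁻¹ := by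
        apply mul_le_mul_of_nonneg_right hA (by positivity)
      have hpos : (0:ℝ) ≤ 2 * (1 + t) ^ (-s₁) * (1 + t - τ)⁻¹ := by positivity
      nlinarith
    · -- 1+τ > (1+t)/2
      have hcb : 1 + t < 2 * (1 + τ) := by linarith
      have hinv : (1 + τ)⁻¹ ≤ 2 * (1 + t)⁻¹ := by
        rw [← div_eq_mul_inv, le_div_iff₀ hbt, inv_mul_eq_div, div_le_iff₀ hb]
        linarith
      have hmono : (1 + t - τ) ^ (1 - s₁) ≤ (1 + t) ^ (1 - s₁) :=
        Real.rpow_le_rpow ha.le (by linarith) (by linarith)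
      have eq1 : (1 + t - τ) ^ (-s₁) = (1 + t - τ) ^ (1 - s₁) * (1 + t - τ)⁻¹ := by
        rw [← Real.rpow_neg_one (1 + t - τ), ← Real.rpow_add ha]
        congr 1; ring
      have eq2 : (1 + t) ^ (1 - s₁) * (1 + t)⁻¹ = (1 + t) ^ (-s₁) := by
        rw [← Real.rpow_neg_one (1 + t), ← Real.rpow_add hbt]
        congr 1; ring
      have hB : (1 + t - τ) ^ (-s₁) * (1 + τ)⁻¹ ≤ 2 * (1 + t) ^ (-s₁) * (1 + t - τ)⁻¹ := by
        calc (1 + t - τ) ^ (-s₁) * (1 + τ)⁻¹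
            ≤ (1 + t - τ) ^ (-s₁) * (2 * (1 + t)⁻¹) := by
              apply mul_le_mul_of_nonneg_left hinv (by positivity)
        _ = 2 * ((1 + t - τ) ^ (1 - s₁) * (1 + t)⁻¹) * (1 + t - τ)⁻¹ := by
              rw [eq1]; ring
        _ ≤ 2 * ((1 + t) ^ (1 - s₁) * (1 + t)⁻¹) * (1 + t - τ)⁻¹ := by
              gcongr
        _ = 2 * (1 + t) ^ (-s₁) * (1 + t - τ)⁻¹ := by rw [eq2]
      have hpos : (0:ℝ) ≤ 2 * (1 + t) ^ (-s₁) * (1 + τ)⁻¹ := by positivity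
      nlinarith
  -- integrability
  have cont1 : ContinuousOn (fun τ : ℝ => (1 + t - τ) ^ (-s₁) * (1 + τ) ^ (-(1:ℝ)))
      (Set.uIcc 0 t) := by
    rw [huIcc]
    apply ContinuousOn.mul
    · apply ContinuousOn.rpow_const
      · exact (continuous_const.sub continuous_id).continuousOn
      · intro x hx; left; obtain ⟨h0, h1'⟩ := hx
        have : (0:ℝ) < 1 + t - x := by linarith
        exact ne_of_gt this
    · apply ContinuousOn.rpow_const
      · exact (continuous_const.add continuous_id).continuousOn
      · intro x hx; left; obtain ⟨h0, h1'⟩ := hx; positivity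
  have cont2 : ContinuousOn (fun τ : ℝ => 2 * (1 + t) ^ (-s₁) * ((1 + τ)⁻¹ + (1 + t - τ)⁻¹))
      (Set.uIcc 0 t) := by
    rw [huIcc]
    apply ContinuousOn.mul continuousOn_const
    apply ContinuousOn.add
    · apply ContinuousOn.inv₀ (continuous_const.add continuous_id).continuousOn
      intro x hx; obtain ⟨h0, h1'⟩ := hx; show (1:ℝ) + x ≠ 0; positivity
    · apply ContinuousOn.inv₀ (continuous_const.sub continuous_id).continuousOn
      intro x hx; obtain ⟨h0, h1'⟩ := hx
      have : (0:ℝ) < 1 + t - x := by linarith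
      exact ne_of_gt this
  have int1 : IntervalIntegrable (fun τ : ℝ => (1 + t - τ) ^ (-s₁) * (1 + τ) ^ (-(1:ℝ)))
      MeasureTheory.volume 0 t := cont1.intervalIntegrable
  have int2 : IntervalIntegrable
      (fun τ : ℝ => 2 * (1 + t) ^ (-s₁) * ((1 + τ)⁻¹ + (1 + t - τ)⁻¹))
      MeasureTheory.volume 0 t := cont2.intervalIntegrable
  -- monotonicity of integral
  have hmono := intervalIntegral.integral_mono_on ht0 int1 int2
    (by intro x hx; exact key x hx)
  -- compute the RHS integral
  have I1 : (∫ τ in (0:ℝ)..t, (1 + τ)⁻¹) = Real.log (1 + t) := by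
    have h := intervalIntegral.integral_comp_add_left (a := (0:ℝ)) (b := t)
      (fun x => x⁻¹) 1
    rw [h, add_zero]
    rw [integral_inv]
    · rw [div_one]
    · rw [Set.uIcc_of_le (by linarith : (1:ℝ) ≤ 1 + t)]
      intro hmem; obtain ⟨h0, _⟩ := hmem; linarith
  have I2 : (∫ τ in (0:ℝ)..t, (1 + t - τ)⁻¹) = Real.log (1 + t) := by
    have h := intervalIntegral.integral_comp_sub_left (a := (0:ℝ)) (b := t)
      (fun x => x⁻¹) (1 + t)
    have : (∫ τ in (0:ℝ)..t, (1 + t - τ)⁻¹) = ∫ x in (1 + t - t)..(1 + t - 0), x⁻¹ := h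
    rw [this]
    have e1 : 1 + t - t = (1:ℝ) := by ring
    have e2 : 1 + t - 0 = (1 + t : ℝ) := by ring
    rw [e1, e2, integral_inv]
    · rw [div_one]
    · rw [Set.uIcc_of_le (by linarith : (1:ℝ) ≤ 1 + t)]
      intro hmem; obtain ⟨h0, _⟩ := hmem; linarith
  have intinv1 : IntervalIntegrable (fun τ : ℝ => (1 + τ)⁻¹) MeasureTheory.volume 0 t := by
    apply ContinuousOn.intervalIntegrable
    rw [huIcc]
    apply ContinuousOn.inv₀ (continuous_const.add continuous_id).continuousOn
    intro x hx; obtain ⟨h0, h1'⟩ := hx; show (1:ℝ) + x ≠ 0; positivity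
  have intinv2 : IntervalIntegrable (fun τ : ℝ => (1 + t - τ)⁻¹) MeasureTheory.volume 0 t := by
    apply ContinuousOn.intervalIntegrable
    rw [huIcc]
    apply ContinuousOn.inv₀ (continuous_const.sub continuous_id).continuousOn
    intro x hx; obtain ⟨h0, h1'⟩ := hx
    have : (0:ℝ) < 1 + t - x := by linarith
    exact ne_of_gt this
  have RHSval : (∫ τ in (0:ℝ)..t, 2 * (1 + t) ^ (-s₁) * ((1 + τ)⁻¹ + (1 + t - τ)⁻¹))
      = 4 * (1 + t) ^ (-s₁) * Real.log (1 + t) := by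
    rw [intervalIntegral.integral_const_mul, intervalIntegral.integral_add intinv1 intinv2,
      I1, I2]
    ring
  calc (∫ τ in (0:ℝ)..t, (1 + t - τ) ^ (-s₁) * (1 + τ) ^ (-(1:ℝ)))
      ≤ ∫ τ in (0:ℝ)..t, 2 * (1 + t) ^ (-s₁) * ((1 + τ)⁻¹ + (1 + t - τ)⁻¹) := hmono
  _ = 4 * (1 + t) ^ (-s₁) * Real.log (1 + t) := RHSval
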